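/- Let (X,d) be a finite metric space, H a real Hilbert space, and {Z_t}_{t≥0} a stationary reversible Markov chain on X satisfying d(Z_0,Z_1) ≤ 1 almost surely. Then for every map f : X → H, every n ≥ 1, and every λ > 0, Pr(‖f(Z_{2n}) − f(Z_0)‖_H ≥ λ) ≤ 4 exp(−λ² / (32 n ‖f‖_Lip²)). -/

import Mathlib

open Finset MeasureTheory
open scoped Nat

noncomputable section

namespace TailAux

lemma convexOn_cosh_sqrt (c : ℝ) :
    ConvexOn ℝ (Set.Ici (0:ℝ)) (fun s => Real.cosh (c * Real.sqrt s)) := by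
  have key : ∀ s : ℝ, 0 ≤ s →
      HasSum (fun k : ℕ => (c ^ 2 * s) ^ k / ↑(2 * k)!) (Real.cosh (c * Real.sqrt s)) := by
    intro s hs
    have h := Real.hasSum_cosh (c * Real.sqrt s)
    have he : (fun k : ℕ => (c ^ 2 * s) ^ k / ((2 * k)! : ℝ))
        = fun k : ℕ => (c * Real.sqrt s) ^ (2 * k) / ↑(2 * k)! := by
      funext k
      rw [pow_mul, mul_pow c (Real.sqrt s) 2, Real.sq_sqrt hs, mul_pow]
    rw [he]
    exact h
  refine ⟨convex_Ici 0, ?_⟩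
  intro x hx y hy a b ha hb hab
  have hx' : (0:ℝ) ≤ x := hx
  have hy' : (0:ℝ) ≤ y := hy
  simp only [smul_eq_mul]
  have h1 := key x hx'
  have h2 := key y hy'
  have h3 := key (a * x + b * y) (by positivity)
  rw [← h3.tsum_eq, ← h1.tsum_eq, ← h2.tsum_eq, ← tsum_mul_left, ← tsum_mul_left,
    ← Summable.tsum_add (h1.summable.mul_left a) (h2.summable.mul_left b)]
  refine Summable.tsum_le_tsum ?_ h3.summable ((h1.summable.mul_left a).add (h2.summable.mul_left b))
  intro k
  have hpow : (c ^ 2 * (a * x + b * y)) ^ k ≤ a * (c ^ 2 * x) ^ k + b * (c ^ 2 * y) ^ k := by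
    have hcx : (c ^ 2 * x) ∈ Set.Ici (0:ℝ) := by simp only [Set.mem_Ici]; positivity
    have hcy : (c ^ 2 * y) ∈ Set.Ici (0:ℝ) := by simp only [Set.mem_Ici]; positivity
    have := (convexOn_pow (𝕜 := ℝ) k).2 hcx hcy ha hb hab
    simp only [smul_eq_mul] at this
    calc (c ^ 2 * (a * x + b * y)) ^ k = (a * (c ^ 2 * x) + b * (c ^ 2 * y)) ^ k := by ring_nf
      _ ≤ a * (c ^ 2 * x) ^ k + b * (c ^ 2 * y) ^ k := this
  have hq : (0:ℝ) < ((2 * k)! : ℝ) := by positivity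
  calc (c ^ 2 * (a * x + b * y)) ^ k / ↑(2 * k)!
      ≤ (a * (c ^ 2 * x) ^ k + b * (c ^ 2 * y) ^ k) / ↑(2 * k)! := by
        gcongr
    _ = a * ((c ^ 2 * x) ^ k / ↑(2 * k)!) + b * ((c ^ 2 * y) ^ k / ↑(2 * k)!) := by ring

lemma cosh_sqrt_mono (c : ℝ) {s t : ℝ} (hst : s ≤ t) :
    Real.cosh (c * Real.sqrt s) ≤ Real.cosh (c * Real.sqrt t) := by
  rw [Real.cosh_le_cosh, abs_mul, abs_mul, abs_of_nonneg (Real.sqrt_nonneg s),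
    abs_of_nonneg (Real.sqrt_nonneg t)]
  exact mul_le_mul_of_nonneg_left (Real.sqrt_le_sqrt hst) (abs_nonneg c)

variable {H : Type*} [NormedAddCommGroup H] [InnerProductSpace ℝ H]

lemma pinelis_step {ι : Type*} [Fintype ι] (p : ι → ℝ) (d : ι → H) (v : H) (a c : ℝ)
    (hp0 : ∀ i, 0 ≤ p i) (hp1 : ∑ i, p i = 1) (ha : 0 ≤ a) (hc : 0 ≤ c)
    (hmean : ∑ i, p i • d i = 0) (hbd : ∀ i, p i ≠ 0 → ‖d i‖ ≤ a) :
    ∑ i, p i * Real.cosh (c * ‖v + d i‖) ≤ Real.cosh (c * ‖v‖) * Real.cosh (c * a) := by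
  rcases eq_or_lt_of_le ha with ha0 | hapos
  · -- a = 0 : all d i with weight are 0
    have hd0 : ∀ i, p i ≠ 0 → d i = 0 := by
      intro i hi
      have := hbd i hi
      rw [← ha0] at this
      exact norm_le_zero_iff.1 this
    calc ∑ i, p i * Real.cosh (c * ‖v + d i‖) = ∑ i, p i * Real.cosh (c * ‖v‖) := by
          apply Finset.sum_congr rfl
          intro i _
          by_cases hi : p i = 0
          · rw [hi, zero_mul, zero_mul]
          · rw [hd0 i hi, add_zero]
      _ = Real.cosh (c * ‖v‖) := by rw [← Finset.sum_mul, hp1, one_mul]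
      _ ≤ Real.cosh (c * ‖v‖) * Real.cosh (c * a) := le_of_eq (by
          rw [show c * a = 0 by rw [← ha0, mul_zero], Real.cosh_zero, mul_one])
  rcases eq_or_lt_of_le (norm_nonneg v) with hr0 | hrpos
  · -- v = 0
    calc ∑ i, p i * Real.cosh (c * ‖v + d i‖) ≤ ∑ i, p i * Real.cosh (c * a) := by
          apply Finset.sum_le_sum
          intro i _
          by_cases hi : p i = 0
          · rw [hi, zero_mul, zero_mul]
          · refine mul_le_mul_of_nonneg_left ?_ (hp0 i)
            have hv : v = 0 := by rwa [eq_comm, norm_eq_zero] at hr0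
            rw [Real.cosh_le_cosh, abs_mul, abs_mul, hv, zero_add,
              abs_of_nonneg (norm_nonneg _), abs_of_nonneg ha]
            exact mul_le_mul_of_nonneg_left (hbd i hi) (abs_nonneg c)
      _ = Real.cosh (c * a) := by rw [← Finset.sum_mul, hp1, one_mul]
      _ = Real.cosh (c * ‖v‖) * Real.cosh (c * a) := by
          rw [← hr0, mul_zero, Real.cosh_zero, one_mul]
  -- main case
  set r := ‖v‖ with hrdef
  set W : ι → ℝ := fun i => (inner ℝ v (d i) : ℝ) with hWdef
  have hra : 0 < r * a := mul_pos hrpos hapos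
  have hWsum : ∑ i, p i * W i = 0 := by
    have h0 : (inner ℝ v (∑ i, p i • d i) : ℝ) = 0 := by rw [hmean, inner_zero_right]
    rw [inner_sum] at h0
    simpa only [real_inner_smul_right] using h0
  set Cp := Real.cosh (c * (r + a)) with hCp
  set Cm := Real.cosh (c * (r - a)) with hCm
  have key : ∀ i, p i * Real.cosh (c * ‖v + d i‖) ≤
      p i * ((r * a + W i) / (2 * (r * a)) * Cp + (r * a - W i) / (2 * (r * a)) * Cm) := by
    intro i
    by_cases hi : p i = 0
    · rw [hi, zero_mul, zero_mul]
    refine mul_le_mul_of_nonneg_left ?_ (hp0 i)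
    have hdn : ‖d i‖ ≤ a := hbd i hi
    have hWle : |W i| ≤ r * a :=
      le_trans (abs_real_inner_le_norm v (d i)) (mul_le_mul_of_nonneg_left hdn (norm_nonneg v))
    have hWle1 := (abs_le.1 hWle).1
    have hWle2 := (abs_le.1 hWle).2
    have e1 : Real.cosh (c * ‖v + d i‖) = Real.cosh (c * Real.sqrt (‖v + d i‖ ^ 2)) := by
      rw [Real.sqrt_sq (norm_nonneg _)]
    have e2 : Real.cosh (c * Real.sqrt (‖v + d i‖ ^ 2))
        ≤ Real.cosh (c * Real.sqrt (r ^ 2 + a ^ 2 + 2 * W i)) := by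
      apply cosh_sqrt_mono c
      rw [norm_add_sq_real]
      have hd2 : ‖d i‖ ^ 2 ≤ a ^ 2 := by nlinarith [norm_nonneg (d i)]
      have hWi : W i = (inner ℝ v (d i) : ℝ) := rfl
      have hr : r = ‖v‖ := hrdef
      nlinarith [hd2, hWi, hr]
    have hθ1 : (0:ℝ) ≤ (r * a + W i) / (2 * (r * a)) :=
      div_nonneg (by linarith) (by positivity)
    have hθ2 : (0:ℝ) ≤ (r * a - W i) / (2 * (r * a)) :=
      div_nonneg (by linarith) (by positivity)
    have hθsum : (r * a + W i) / (2 * (r * a)) + (r * a - W i) / (2 * (r * a)) = 1 := by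
      field_simp
      ring
    have hconv := (convexOn_cosh_sqrt c).2
      (Set.mem_Ici.2 (sq_nonneg (r + a))) (Set.mem_Ici.2 (sq_nonneg (r - a)))
      hθ1 hθ2 hθsum
    simp only [smul_eq_mul] at hconv
    have hcomb : (r * a + W i) / (2 * (r * a)) * (r + a) ^ 2
        + (r * a - W i) / (2 * (r * a)) * (r - a) ^ 2 = r ^ 2 + a ^ 2 + 2 * W i := by
      field_simp
      ring
    rw [hcomb] at hconv
    have e3 : Real.cosh (c * Real.sqrt ((r + a) ^ 2)) = Cp := by
      rw [Real.sqrt_sq (by positivity), hCp]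
    have e4 : Real.cosh (c * Real.sqrt ((r - a) ^ 2)) = Cm := by
      rw [Real.sqrt_sq_eq_abs, hCm, ← Real.cosh_abs (c * (r - a)), abs_mul,
        abs_of_nonneg hc]
    rw [e3, e4] at hconv
    calc Real.cosh (c * ‖v + d i‖)
        ≤ Real.cosh (c * Real.sqrt (r ^ 2 + a ^ 2 + 2 * W i)) := by rw [e1]; exact e2
      _ ≤ (r * a + W i) / (2 * (r * a)) * Cp + (r * a - W i) / (2 * (r * a)) * Cm := hconv
  calc ∑ i, p i * Real.cosh (c * ‖v + d i‖)
      ≤ ∑ i, p i * ((r * a + W i) / (2 * (r * a)) * Cp + (r * a - W i) / (2 * (r * a)) * Cm) :=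
        Finset.sum_le_sum (fun i _ => key i)
    _ = (∑ i, (p i * ((r * a + W i) / (2 * (r * a))))) * Cp
        + (∑ i, (p i * ((r * a - W i) / (2 * (r * a))))) * Cm := by
        rw [Finset.sum_mul, Finset.sum_mul, ← Finset.sum_add_distrib]
        apply Finset.sum_congr rfl
        intro i _
        ring
    _ = (1 / 2) * Cp + (1 / 2) * Cm := by
        have hne : (2 * (r * a)) ≠ 0 := by positivity
        have hA : (∑ i, (p i * ((r * a + W i) / (2 * (r * a))))) = 1 / 2 := by
          have : ∀ i, p i * ((r * a + W i) / (2 * (r * a)))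
              = (p i * (r * a) + p i * W i) / (2 * (r * a)) := by intro i; ring
          rw [Finset.sum_congr rfl (fun i _ => this i), ← Finset.sum_div,
            Finset.sum_add_distrib, ← Finset.sum_mul, hp1, hWsum, one_mul, add_zero]
          field_simp
        have hB : (∑ i, (p i * ((r * a - W i) / (2 * (r * a))))) = 1 / 2 := by
          have : ∀ i, p i * ((r * a - W i) / (2 * (r * a)))
              = (p i * (r * a) - p i * W i) / (2 * (r * a)) := by intro i; ring
          rw [Finset.sum_congr rfl (fun i _ => this i), ← Finset.sum_div,
            Finset.sum_sub_distrib, ← Finset.sum_mul, hp1, hWsum, one_mul, sub_zero]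
          field_simp
        rw [hA, hB]
    _ = Real.cosh (c * r) * Real.cosh (c * a) := by
        rw [hCp, hCm, show c * (r + a) = c * r + c * a by ring,
          show c * (r - a) = c * r - c * a by ring, Real.cosh_add, Real.cosh_sub]
        ring


variable {X : Type*} [Fintype X]

/-- Weight of a path under the stationary chain. -/
def pathW (π : X → ℝ) (P : X → X → ℝ) (m : ℕ) (ρ : Fin (m+1) → X) : ℝ :=
  π (ρ 0) * ∏ i : Fin m, P (ρ i.castSucc) (ρ i.succ)

/-- Forward martingale along a path. -/
def pathM (f g : X → H) (m : ℕ) (ρ : Fin (m+1) → X) : H :=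
  ∑ s : Fin m, (f (ρ s.succ) - g (ρ s.castSucc))

lemma pathW_nonneg (π : X → ℝ) (P : X → X → ℝ) (hπ0 : ∀ x, 0 ≤ π x)
    (hP0 : ∀ x y, 0 ≤ P x y) (m : ℕ) (ρ : Fin (m+1) → X) : 0 ≤ pathW π P m ρ :=
  mul_nonneg (hπ0 _) (Finset.prod_nonneg fun _ _ => hP0 _ _)

lemma pathW_snoc (π : X → ℝ) (P : X → X → ℝ) (m : ℕ) (σ : Fin (m+1) → X) (y : X) :
    pathW π P (m+1) (Fin.snoc σ y) = pathW π P m σ * P (σ (Fin.last m)) y := by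
  unfold pathW
  have h0 : (Fin.snoc σ y : Fin (m+1+1) → X) 0 = σ 0 := by
    have := Fin.snoc_castSucc (α := fun _ : Fin (m+1+1) => X) y σ 0
    rwa [Fin.castSucc_zero] at this
  rw [Fin.prod_univ_castSucc, h0]
  have hmid : ∀ i : Fin m,
      P ((Fin.snoc σ y : Fin (m+1+1) → X) (i.castSucc.castSucc))
        ((Fin.snoc σ y : Fin (m+1+1) → X) (i.castSucc.succ))
      = P (σ i.castSucc) (σ i.succ) := by
    intro i
    rw [Fin.succ_castSucc, Fin.snoc_castSucc, Fin.snoc_castSucc]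
  have hlastc : (Fin.snoc σ y : Fin (m+1+1) → X) ((Fin.last m).castSucc) = σ (Fin.last m) :=
    Fin.snoc_castSucc _ _ _
  have hlasts : (Fin.snoc σ y : Fin (m+1+1) → X) ((Fin.last m).succ) = y := by
    rw [Fin.succ_last]
    exact Fin.snoc_last _ _
  rw [Finset.prod_congr rfl (fun i _ => hmid i), hlastc, hlasts, mul_assoc]

lemma pathM_snoc (f g : X → H) (m : ℕ) (σ : Fin (m+1) → X) (y : X) :
    pathM f g (m+1) (Fin.snoc σ y) = pathM f g m σ + (f y - g (σ (Fin.last m))) := by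
  unfold pathM
  rw [Fin.sum_univ_castSucc]
  have hmid : ∀ i : Fin m,
      f ((Fin.snoc σ y : Fin (m+1+1) → X) (i.castSucc.succ))
        - g ((Fin.snoc σ y : Fin (m+1+1) → X) (i.castSucc.castSucc))
      = f (σ i.succ) - g (σ i.castSucc) := by
    intro i
    rw [Fin.succ_castSucc, Fin.snoc_castSucc, Fin.snoc_castSucc]
  have hlastc : (Fin.snoc σ y : Fin (m+1+1) → X) ((Fin.last m).castSucc) = σ (Fin.last m) :=
    Fin.snoc_castSucc _ _ _
  have hlasts : (Fin.snoc σ y : Fin (m+1+1) → X) ((Fin.last m).succ) = y := by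
    rw [Fin.succ_last]
    exact Fin.snoc_last _ _
  rw [Finset.sum_congr rfl (fun i _ => hmid i), hlastc, hlasts]

lemma tele (g : X → H) (m : ℕ) (ρ : Fin (m+1) → X) :
    ∑ s : Fin m, (g (ρ s.succ) - g (ρ s.castSucc)) = g (ρ (Fin.last m)) - g (ρ 0) := by
  induction m with
  | zero => simp [Fin.last]
  | succ m ih =>
    rw [Fin.sum_univ_castSucc]
    have hmid : ∀ s : Fin m,
        g (ρ (s.castSucc.succ)) - g (ρ (s.castSucc.castSucc))
        = g ((ρ ∘ Fin.castSucc) s.succ) - g ((ρ ∘ Fin.castSucc) s.castSucc) := by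
      intro s
      rw [Function.comp_apply, Function.comp_apply, Fin.succ_castSucc]
    rw [Finset.sum_congr rfl (fun s _ => hmid s), ih (ρ ∘ Fin.castSucc)]
    simp only [Function.comp_apply]
    rw [Fin.succ_last]
    have h0 : ρ (Fin.castSucc 0) = ρ 0 := by rw [Fin.castSucc_zero]
    rw [h0]
    abel

lemma pathM_rev (f g : X → H) (m : ℕ) (ρ : Fin (m+1) → X) :
    pathM f g m (ρ ∘ Fin.rev) = ∑ s : Fin m, (f (ρ s.castSucc) - g (ρ s.succ)) := by
  unfold pathM
  rw [← Equiv.sum_comp (Fin.revPerm (n := m))]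
  apply Finset.sum_congr rfl
  intro t _
  simp only [Fin.revPerm_apply, Function.comp_apply]
  rw [Fin.rev_succ, Fin.rev_castSucc, Fin.rev_rev]

lemma pathW_core_rev (π : X → ℝ) (P : X → X → ℝ)
    (hrev : ∀ x y, π x * P x y = π y * P y x) :
    ∀ (m : ℕ) (ρ : Fin (m+1) → X),
      π (ρ 0) * ∏ i : Fin m, P (ρ i.castSucc) (ρ i.succ)
        = π (ρ (Fin.last m)) * ∏ i : Fin m, P (ρ i.succ) (ρ i.castSucc) := by
  intro m
  induction m with
  | zero => intro ρ; rfl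
  | succ m ih =>
    intro ρ
    have h := ih (ρ ∘ Fin.castSucc)
    simp only [Function.comp_apply] at h
    have h0 : ρ (Fin.castSucc 0) = ρ 0 := by rw [Fin.castSucc_zero]
    rw [h0] at h
    rw [Fin.prod_univ_castSucc, Fin.prod_univ_castSucc]
    have hmid1 : ∀ i : Fin m,
        P (ρ (i.castSucc.castSucc)) (ρ (i.castSucc.succ))
        = P (ρ (Fin.castSucc i.castSucc)) (ρ (Fin.castSucc i.succ)) := by
      intro i; rw [Fin.succ_castSucc]
    have hmid2 : ∀ i : Fin m,
        P (ρ (i.castSucc.succ)) (ρ (i.castSucc.castSucc))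
        = P (ρ (Fin.castSucc i.succ)) (ρ (Fin.castSucc i.castSucc)) := by
      intro i; rw [Fin.succ_castSucc]
    rw [Finset.prod_congr rfl (fun i _ => hmid1 i), Finset.prod_congr rfl (fun i _ => hmid2 i)]
    set A := ∏ i : Fin m, P (ρ (Fin.castSucc i.castSucc)) (ρ (Fin.castSucc i.succ)) with hA
    set B := ∏ i : Fin m, P (ρ (Fin.castSucc i.succ)) (ρ (Fin.castSucc i.castSucc)) with hB
    -- h : π (ρ 0) * A = π (ρ (castSucc (last m))) * B
    calc π (ρ 0) * (A * P (ρ ((Fin.last m).castSucc)) (ρ ((Fin.last m).succ)))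
        = (π (ρ 0) * A) * P (ρ ((Fin.last m).castSucc)) (ρ ((Fin.last m).succ)) := by ring
      _ = (π (ρ (Fin.castSucc (Fin.last m))) * B) * P (ρ ((Fin.last m).castSucc)) (ρ ((Fin.last m).succ)) := by
          rw [h]
      _ = B * (π (ρ ((Fin.last m).castSucc)) * P (ρ ((Fin.last m).castSucc)) (ρ ((Fin.last m).succ))) := by
          ring
      _ = B * (π (ρ ((Fin.last m).succ)) * P (ρ ((Fin.last m).succ)) (ρ ((Fin.last m).castSucc))) := by
          rw [hrev]
      _ = π (ρ (Fin.last (m+1))) * (B * P (ρ ((Fin.last m).succ)) (ρ ((Fin.last m).castSucc))) := by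
          rw [Fin.succ_last]
          ring

lemma pathW_rev (π : X → ℝ) (P : X → X → ℝ)
    (hrev : ∀ x y, π x * P x y = π y * P y x) (m : ℕ) (ρ : Fin (m+1) → X) :
    pathW π P m (ρ ∘ Fin.rev) = pathW π P m ρ := by
  unfold pathW
  have h0 : (ρ ∘ Fin.rev) 0 = ρ (Fin.last m) := by
    rw [Function.comp_apply, Fin.rev_zero]
  rw [h0]
  have hterm : ∀ i : Fin m,
      P ((ρ ∘ Fin.rev) i.castSucc) ((ρ ∘ Fin.rev) i.succ)
      = P (ρ (i.rev.succ)) (ρ (i.rev.castSucc)) := by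
    intro i
    simp only [Function.comp_apply]
    rw [Fin.rev_castSucc, Fin.rev_succ]
  rw [Finset.prod_congr rfl (fun i _ => hterm i)]
  have hre : ∏ i : Fin m, P (ρ (i.rev.succ)) (ρ (i.rev.castSucc))
      = ∏ i : Fin m, P (ρ (i.succ)) (ρ (i.castSucc)) := by
    rw [← Equiv.prod_comp (Fin.revPerm (n := m)) (fun i => P (ρ (i.succ)) (ρ (i.castSucc)))]
    rfl
  rw [hre, ← pathW_core_rev π P hrev m ρ]

lemma pathW_pos (π : X → ℝ) (P : X → X → ℝ)
    (hπ0 : ∀ x, 0 ≤ π x) (hP0 : ∀ x y, 0 ≤ P x y)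
    (hstat : ∀ y, ∑ x, π x * P x y = π y)
    (m : ℕ) (ρ : Fin (m+1) → X) (h : pathW π P m ρ ≠ 0) :
    (∀ i, 0 < π (ρ i)) ∧ (∀ s : Fin m, 0 < P (ρ s.castSucc) (ρ s.succ)) := by
  have hP : ∀ s : Fin m, 0 < P (ρ s.castSucc) (ρ s.succ) := by
    intro s
    rcases (hP0 (ρ s.castSucc) (ρ s.succ)).lt_or_eq with h' | h'
    · exact h'
    · exfalso
      apply h
      unfold pathW
      rw [Finset.prod_eq_zero (Finset.mem_univ s) h'.symm, mul_zero]
  have hπρ0 : 0 < π (ρ 0) := by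
    rcases (hπ0 (ρ 0)).lt_or_eq with h' | h'
    · exact h'
    · exfalso
      apply h
      unfold pathW
      rw [← h', zero_mul]
  refine ⟨?_, hP⟩
  intro i
  induction i using Fin.induction with
  | zero => exact hπρ0
  | succ s ihs =>
    have hle : π (ρ s.castSucc) * P (ρ s.castSucc) (ρ s.succ) ≤ π (ρ s.succ) := by
      rw [← hstat (ρ s.succ)]
      exact Finset.single_le_sum (fun x _ => mul_nonneg (hπ0 x) (hP0 x _)) (Finset.mem_univ _)
    exact lt_of_lt_of_le (mul_pos ihs (hP s)) hle


/-- snoc equivalence for path spaces -/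
def snocEquiv (X : Type*) (m : ℕ) : ((Fin (m+1) → X) × X) ≃ (Fin (m+1+1) → X) where
  toFun := fun σy => Fin.snoc σy.1 σy.2
  invFun := fun ρ => (Fin.init ρ, ρ (Fin.last (m+1)))
  left_inv := fun σy => by
    simp only [Fin.init_snoc, Fin.snoc_last]
  right_inv := fun ρ => Fin.snoc_init_self ρ

lemma expMoment (π : X → ℝ) (P : X → X → ℝ) (f g : X → H)
    (hπ0 : ∀ x, 0 ≤ π x) (hπ1 : ∑ x, π x = 1)
    (hP0 : ∀ x y, 0 ≤ P x y) (hP1 : ∀ x, ∑ y, P x y = 1)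
    (hstat : ∀ y, ∑ x, π x * P x y = π y)
    (hg : ∀ x, ∑ y, P x y • f y = g x)
    (a c : ℝ) (ha : 0 ≤ a) (hc : 0 ≤ c)
    (hbd : ∀ x y, 0 < π x → P x y ≠ 0 → ‖f y - g x‖ ≤ a) :
    ∀ m : ℕ, ∑ ρ : Fin (m+1) → X, pathW π P m ρ * Real.cosh (c * ‖pathM f g m ρ‖)
      ≤ Real.cosh (c * a) ^ m := by
  intro m
  induction m with
  | zero =>
    have hzero : ∀ ρ : Fin 1 → X, pathM f g 0 ρ = 0 := by
      intro ρ
      unfold pathM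
      simp
    have hW0 : ∀ ρ : Fin 1 → X, pathW π P 0 ρ = π (ρ 0) := by
      intro ρ
      unfold pathW
      simp
    calc ∑ ρ : Fin 1 → X, pathW π P 0 ρ * Real.cosh (c * ‖pathM f g 0 ρ‖)
        = ∑ ρ : Fin 1 → X, π (ρ 0) := by
          apply Finset.sum_congr rfl
          intro ρ _
          rw [hzero ρ, hW0 ρ, norm_zero, mul_zero, Real.cosh_zero, mul_one]
      _ = ∑ x : X, π x := Fintype.sum_equiv (Equiv.funUnique (Fin 1) X) _ _ (fun ρ => rfl)
      _ ≤ Real.cosh (c * a) ^ 0 := by rw [hπ1, pow_zero]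
  | succ m ih =>
    have hre : ∑ ρ : Fin (m+1+1) → X, pathW π P (m+1) ρ * Real.cosh (c * ‖pathM f g (m+1) ρ‖)
        = ∑ σy : (Fin (m+1) → X) × X,
            pathW π P (m+1) (Fin.snoc σy.1 σy.2)
              * Real.cosh (c * ‖pathM f g (m+1) (Fin.snoc σy.1 σy.2)‖) :=
      (Fintype.sum_equiv (snocEquiv X m) _ _ (fun σy => rfl)).symm
    rw [hre, Fintype.sum_prod_type]
    have hinner : ∀ σ : Fin (m+1) → X,
        ∑ y : X, pathW π P (m+1) (Fin.snoc σ y)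
          * Real.cosh (c * ‖pathM f g (m+1) (Fin.snoc σ y)‖)
        ≤ pathW π P m σ * Real.cosh (c * ‖pathM f g m σ‖) * Real.cosh (c * a) := by
      intro σ
      by_cases h0 : pathW π P m σ = 0
      · rw [h0, zero_mul, zero_mul]
        apply le_of_eq
        apply Finset.sum_eq_zero
        intro y _
        rw [pathW_snoc, h0, zero_mul, zero_mul]
      · have hWpos : 0 < pathW π P m σ :=
          (pathW_nonneg π P hπ0 hP0 m σ).lt_of_ne (Ne.symm h0)
        have hπlast : 0 < π (σ (Fin.last m)) :=
          (pathW_pos π P hπ0 hP0 hstat m σ h0).1 (Fin.last m)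
        set x := σ (Fin.last m) with hx
        have hpin := pinelis_step (P x) (fun y => f y - g x) (pathM f g m σ) a c
          (hP0 x) (hP1 x) ha hc
          (by
            have hms : ∑ y : X, P x y • (f y - g x)
                = (∑ y : X, P x y • f y) - (∑ y : X, P x y) • g x := by
              rw [Finset.sum_smul, ← Finset.sum_sub_distrib]
              exact Finset.sum_congr rfl (fun y _ => smul_sub _ _ _)
            rw [hms, hg x, hP1 x, one_smul, sub_self])
          (fun y hy => hbd x y hπlast hy)
        calc ∑ y : X, pathW π P (m+1) (Fin.snoc σ y)
              * Real.cosh (c * ‖pathM f g (m+1) (Fin.snoc σ y)‖)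
            = ∑ y : X, pathW π P m σ
              * (P x y * Real.cosh (c * ‖pathM f g m σ + (f y - g x)‖)) := by
              apply Finset.sum_congr rfl
              intro y _
              rw [pathW_snoc, pathM_snoc, mul_assoc]
          _ = pathW π P m σ
              * ∑ y : X, P x y * Real.cosh (c * ‖pathM f g m σ + (f y - g x)‖) := by
              rw [Finset.mul_sum]
          _ ≤ pathW π P m σ * (Real.cosh (c * ‖pathM f g m σ‖) * Real.cosh (c * a)) :=
              mul_le_mul_of_nonneg_left hpin hWpos.le
          _ = pathW π P m σ * Real.cosh (c * ‖pathM f g m σ‖) * Real.cosh (c * a) := by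
              ring
    calc ∑ σ : Fin (m+1) → X, ∑ y : X, pathW π P (m+1) (Fin.snoc σ y)
          * Real.cosh (c * ‖pathM f g (m+1) (Fin.snoc σ y)‖)
        ≤ ∑ σ : Fin (m+1) → X,
            pathW π P m σ * Real.cosh (c * ‖pathM f g m σ‖) * Real.cosh (c * a) :=
          Finset.sum_le_sum (fun σ _ => hinner σ)
      _ = (∑ σ : Fin (m+1) → X, pathW π P m σ * Real.cosh (c * ‖pathM f g m σ‖))
          * Real.cosh (c * a) := by rw [Finset.sum_mul]
      _ ≤ Real.cosh (c * a) ^ m * Real.cosh (c * a) :=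
          mul_le_mul_of_nonneg_right ih (Real.cosh_pos _).le
      _ = Real.cosh (c * a) ^ (m+1) := (pow_succ _ m).symm

end TailAux

open TailAux in
/-- **Subgaussian tail for the displacement of stationary reversible chains**
(Corollary 2.2 / `cor:tail`).

Let `(X,d)` be a finite metric space, `H` a real Hilbert space, and `Z` a stationary reversible
Markov chain on `X` (initial distribution `π`, transition kernel `P`, detailed balance), with
`d(Z₀,Z₁) ≤ 1` almost surely.  Then for every `f : X → H` with Lipschitz constant `K`, every
`n ≥ 1` and every `λ > 0`,
`Pr(‖f(Z_{2n}) - f(Z_0)‖ ≥ λ) ≤ 4 exp(-λ² / (32 n K²))`. -/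
theorem tail_bound_of_stationary_reversible_chain
    {X : Type*} [Fintype X] [MetricSpace X]
    {H : Type*} [NormedAddCommGroup H] [InnerProductSpace ℝ H] [CompleteSpace H]
    {Ω : Type*} [m0 : MeasurableSpace Ω] (μ : Measure Ω) [IsProbabilityMeasure μ]
    (Z : ℕ → Ω → X) (hZmeas : ∀ t (s : Set X), MeasurableSet (Z t ⁻¹' s))
    (π : X → ℝ) (P : X → X → ℝ)
    (hπ0 : ∀ x, 0 ≤ π x) (hπ1 : ∑ x, π x = 1)
    (hP0 : ∀ x y, 0 ≤ P x y) (hP1 : ∀ x, ∑ y, P x y = 1)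
    (hstat : ∀ y, ∑ x, π x * P x y = π y)
    (hrev : ∀ x y, π x * P x y = π y * P y x)
    (hchain : ∀ (m : ℕ) (x : Fin (m + 1) → X),
      μ {ω | ∀ i : Fin (m + 1), Z (i : ℕ) ω = x i} =
        ENNReal.ofReal (π (x 0) * ∏ i : Fin m, P (x i.castSucc) (x i.succ)))
    (hstep : ∀ᵐ ω ∂μ, dist (Z 0 ω) (Z 1 ω) ≤ 1)
    (f : X → H) (K : NNReal) (hK : LipschitzWith K f)
    (n : ℕ) (hn : 1 ≤ n) (lam : ℝ) (hlam : 0 < lam) :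
    μ {ω | lam ≤ ‖f (Z (2 * n) ω) - f (Z 0 ω)‖} ≤
      ENNReal.ofReal (4 * Real.exp (-lam ^ 2 / (32 * n * (K : ℝ) ^ 2))) := by
  classical
  set kk := (K : ℝ) with hkk
  have hkk0 : (0:ℝ) ≤ kk := K.coe_nonneg
  rcases hkk0.lt_or_eq with hkpos | hk0
  case inr =>
    -- K = 0 : f is constant
    have hconst : ∀ x y : X, f x = f y := by
      intro x y
      have h := hK.dist_le_mul x y
      rw [← hkk] at h
      rw [← hk0, zero_mul] at h
      exact dist_le_zero.1 h
    have hset : {ω | lam ≤ ‖f (Z (2*n) ω) - f (Z 0 ω)‖} = ∅ := by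
      ext ω
      simp only [Set.mem_setOf_eq, Set.mem_empty_iff_false, iff_false, not_le]
      rw [hconst (Z (2*n) ω) (Z 0 ω), sub_self, norm_zero]
      exact hlam
    rw [hset, measure_empty]
    exact zero_le
  case inl =>
  have hN1 : (1:ℝ) ≤ (n:ℝ) := by exact_mod_cast hn
  have hN0 : (0:ℝ) < (n:ℝ) := lt_of_lt_of_le one_pos hN1
  rcases le_or_gt lam (5*kk) with hsmall | hbig
  · -- trivial case : the bound is at least 1
    have hxle : lam^2/(32*(n:ℝ)*kk^2) ≤ 1 := by
      rw [div_le_one (by positivity)]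
      nlinarith
    have hexp4 : (1:ℝ) ≤ 4 * Real.exp (-lam^2/(32*(n:ℝ)*kk^2)) := by
      have h1 : Real.exp (lam^2/(32*(n:ℝ)*kk^2)) ≤ Real.exp 1 := Real.exp_le_exp.2 hxle
      have h2 : Real.exp 1 < 4 := lt_trans Real.exp_one_lt_d9 (by norm_num)
      have h3 : Real.exp (lam^2/(32*(n:ℝ)*kk^2)) ≤ 4 := le_trans h1 h2.le
      have hpos := Real.exp_pos (lam^2/(32*(n:ℝ)*kk^2))
      rw [neg_div, Real.exp_neg]
      calc (1:ℝ) = (Real.exp (lam^2/(32*(n:ℝ)*kk^2)))⁻¹ * Real.exp (lam^2/(32*(n:ℝ)*kk^2)) :=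
            (inv_mul_cancel₀ hpos.ne').symm
        _ ≤ (Real.exp (lam^2/(32*(n:ℝ)*kk^2)))⁻¹ * 4 :=
            mul_le_mul_of_nonneg_left h3 (inv_nonneg.2 hpos.le)
        _ = 4 * (Real.exp (lam^2/(32*(n:ℝ)*kk^2)))⁻¹ := by ring
    calc μ {ω | lam ≤ ‖f (Z (2*n) ω) - f (Z 0 ω)‖} ≤ 1 := prob_le_one
      _ ≤ ENNReal.ofReal (4 * Real.exp (-lam^2/(32*(n:ℝ)*kk^2))) := by
          rw [← ENNReal.ofReal_one]
          exact ENNReal.ofReal_le_ofReal hexp4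
  -- main case
  have hd1 : ∀ x y : X, 0 < π x * P x y → dist x y ≤ 1 := by
    intro x y hxy
    by_contra hd
    have hnull : μ {ω | ¬ dist (Z 0 ω) (Z 1 ω) ≤ 1} = 0 := MeasureTheory.ae_iff.1 hstep
    have hchain1 := hchain 1 ![x, y]
    have hprod : π ((![x,y] : Fin 2 → X) 0) *
        ∏ i : Fin 1, P ((![x,y] : Fin 2 → X) i.castSucc) ((![x,y] : Fin 2 → X) i.succ)
        = π x * P x y := by
      simp [Fin.prod_univ_one]
    have hsub : {ω | ∀ i : Fin 2, Z (i:ℕ) ω = ![x,y] i}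
        ⊆ {ω | ¬ dist (Z 0 ω) (Z 1 ω) ≤ 1} := by
      intro ω hω
      have h0 := hω 0
      have h1 := hω 1
      simp only [Fin.val_zero, Matrix.cons_val_zero] at h0
      simp only [Fin.val_one, Matrix.cons_val_one, Matrix.head_cons] at h1
      simp only [Set.mem_setOf_eq, h0, h1]
      exact hd
    have hle : μ {ω | ∀ i : Fin 2, Z (i:ℕ) ω = ![x,y] i}
        ≤ μ {ω | ¬ dist (Z 0 ω) (Z 1 ω) ≤ 1} := measure_mono hsub
    rw [hnull, hchain1, hprod] at hle
    have hle2 : π x * P x y ≤ 0 := ENNReal.ofReal_eq_zero.1 (le_antisymm hle zero_le)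
    linarith
  have hKlip : ∀ x y : X, 0 < π x → P x y ≠ 0 → ‖f y - f x‖ ≤ kk := by
    intro x y hx hPxy
    have hdist : dist x y ≤ 1 := hd1 x y (mul_pos hx ((hP0 x y).lt_of_ne (Ne.symm hPxy)))
    have h := hK.dist_le_mul y x
    rw [← hkk, dist_comm y x] at h
    rw [← dist_eq_norm]
    calc dist (f y) (f x) ≤ kk * dist x y := h
      _ ≤ kk * 1 := mul_le_mul_of_nonneg_left hdist hkpos.le
      _ = kk := mul_one kk
  set gg : X → H := fun x => ∑ y, P x y • f y with hgg
  have hgf : ∀ x, 0 < π x → ‖gg x - f x‖ ≤ kk := by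
    intro x hx
    have hfx : f x = ∑ y, P x y • f x := by rw [← Finset.sum_smul, hP1, one_smul]
    have he : gg x - f x = ∑ y, P x y • (f y - f x) := by
      calc gg x - f x = (∑ y, P x y • f y) - ∑ y, P x y • f x := by rw [← hfx]
        _ = ∑ y, (P x y • f y - P x y • f x) := (Finset.sum_sub_distrib _ _).symm
        _ = ∑ y, P x y • (f y - f x) :=
            Finset.sum_congr rfl (fun y _ => (smul_sub _ _ _).symm)
    rw [he]
    calc ‖∑ y, P x y • (f y - f x)‖ ≤ ∑ y, ‖P x y • (f y - f x)‖ := norm_sum_le _ _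
      _ = ∑ y, P x y * ‖f y - f x‖ := by
          apply Finset.sum_congr rfl
          intro y _
          rw [norm_smul, Real.norm_eq_abs, abs_of_nonneg (hP0 x y)]
      _ ≤ ∑ y, P x y * kk := by
          apply Finset.sum_le_sum
          intro y _
          by_cases hy : P x y = 0
          · rw [hy, zero_mul, zero_mul]
          · exact mul_le_mul_of_nonneg_left (hKlip x y hx hy) (hP0 x y)
      _ = kk := by rw [← Finset.sum_mul, hP1, one_mul]
  have hbd2 : ∀ x y, 0 < π x → P x y ≠ 0 → ‖f y - gg x‖ ≤ 2*kk := by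
    intro x y hx hy
    calc ‖f y - gg x‖ = ‖(f y - f x) + (f x - gg x)‖ := by rw [sub_add_sub_cancel]
      _ ≤ ‖f y - f x‖ + ‖f x - gg x‖ := norm_add_le _ _
      _ ≤ kk + kk := add_le_add (hKlip x y hx hy) (by rw [norm_sub_rev]; exact hgf x hx)
      _ = 2*kk := by ring
  -- reduction to path space
  set badf : Finset (Fin (2*n+1) → X) :=
    Finset.univ.filter (fun ρ => lam ≤ ‖f (ρ (Fin.last (2*n))) - f (ρ 0)‖) with hbadf
  have hμ : μ {ω | lam ≤ ‖f (Z (2*n) ω) - f (Z 0 ω)‖}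
      ≤ ENNReal.ofReal (∑ ρ ∈ badf, pathW π P (2*n) ρ) := by
    have hsub : {ω | lam ≤ ‖f (Z (2*n) ω) - f (Z 0 ω)‖}
        ⊆ ⋃ ρ ∈ badf, {ω | ∀ i : Fin (2*n+1), Z (i:ℕ) ω = ρ i} := by
      intro ω hω
      have hmem : (fun i : Fin (2*n+1) => Z (i:ℕ) ω) ∈ badf := by
        rw [hbadf, Finset.mem_filter]
        refine ⟨Finset.mem_univ _, ?_⟩
        simpa [Fin.val_last] using hω
      exact Set.mem_iUnion.2 ⟨_, Set.mem_iUnion.2 ⟨hmem, fun i => rfl⟩⟩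
    calc μ {ω | lam ≤ ‖f (Z (2*n) ω) - f (Z 0 ω)‖}
        ≤ μ (⋃ ρ ∈ badf, {ω | ∀ i : Fin (2*n+1), Z (i:ℕ) ω = ρ i}) := measure_mono hsub
      _ ≤ ∑ ρ ∈ badf, μ {ω | ∀ i : Fin (2*n+1), Z (i:ℕ) ω = ρ i} :=
          MeasureTheory.measure_biUnion_finset_le (μ := μ) badf _
      _ = ∑ ρ ∈ badf, ENNReal.ofReal (pathW π P (2*n) ρ) :=
          Finset.sum_congr rfl (fun ρ _ => hchain (2*n) ρ)
      _ = ENNReal.ofReal (∑ ρ ∈ badf, pathW π P (2*n) ρ) :=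
          (ENNReal.ofReal_sum_of_nonneg (fun ρ _ => pathW_nonneg π P hπ0 hP0 (2*n) ρ)).symm
  -- the martingale tail bound on path space
  set t := lam - kk with ht
  have htpos : 0 < t := by rw [ht]; nlinarith
  set c := t / (8*(n:ℝ)*kk^2) with hcdef
  have hcpos : 0 < c := by rw [hcdef]; positivity
  set badM : Finset (Fin (2*n+1) → X) :=
    Finset.univ.filter (fun ρ => t ≤ ‖pathM f gg (2*n) ρ‖) with hbadM
  set badR : Finset (Fin (2*n+1) → X) :=
    Finset.univ.filter (fun ρ => t ≤ ‖pathM f gg (2*n) (ρ ∘ Fin.rev)‖) with hbadR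
  have hWnn : ∀ ρ, 0 ≤ pathW π P (2*n) ρ := pathW_nonneg π P hπ0 hP0 (2*n)
  have hsubM : ∀ ρ : Fin (2*n+1) → X, ρ ∈ badf → pathW π P (2*n) ρ ≠ 0 → ρ ∈ badM ∪ badR := by
    intro ρ hρ hW
    have hpos := pathW_pos π P hπ0 hP0 hstat (2*n) ρ hW
    have hid : pathM f gg (2*n) ρ - pathM f gg (2*n) (ρ ∘ Fin.rev)
        = (f (ρ (Fin.last (2*n))) + gg (ρ (Fin.last (2*n)))) - (f (ρ 0) + gg (ρ 0)) := by
      rw [pathM_rev]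
      unfold pathM
      rw [← Finset.sum_sub_distrib]
      have hterm : ∀ s : Fin (2*n),
          (f (ρ s.succ) - gg (ρ s.castSucc)) - (f (ρ s.castSucc) - gg (ρ s.succ))
          = (fun x => f x + gg x) (ρ s.succ) - (fun x => f x + gg x) (ρ s.castSucc) := by
        intro s
        simp only
        abel
      rw [Finset.sum_congr rfl (fun s _ => hterm s), tele (fun x => f x + gg x) (2*n) ρ]
    have h2 : ‖(2:ℝ) • (f (ρ (Fin.last (2*n))) - f (ρ 0))‖
        ≤ ‖pathM f gg (2*n) ρ‖ + ‖pathM f gg (2*n) (ρ ∘ Fin.rev)‖ + 2*kk := by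
      have he : (2:ℝ) • (f (ρ (Fin.last (2*n))) - f (ρ 0))
          = (pathM f gg (2*n) ρ - pathM f gg (2*n) (ρ ∘ Fin.rev))
            - (gg (ρ (Fin.last (2*n))) - f (ρ (Fin.last (2*n))))
            + (gg (ρ 0) - f (ρ 0)) := by
        rw [hid, two_smul]
        abel
      rw [he]
      have hg1 : ‖gg (ρ (Fin.last (2*n))) - f (ρ (Fin.last (2*n)))‖ ≤ kk :=
        hgf _ (hpos.1 (Fin.last (2*n)))
      have hg0 : ‖gg (ρ 0) - f (ρ 0)‖ ≤ kk := hgf _ (hpos.1 0)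
      calc ‖(pathM f gg (2*n) ρ - pathM f gg (2*n) (ρ ∘ Fin.rev))
            - (gg (ρ (Fin.last (2*n))) - f (ρ (Fin.last (2*n)))) + (gg (ρ 0) - f (ρ 0))‖
          ≤ ‖(pathM f gg (2*n) ρ - pathM f gg (2*n) (ρ ∘ Fin.rev))
            - (gg (ρ (Fin.last (2*n))) - f (ρ (Fin.last (2*n))))‖ + ‖gg (ρ 0) - f (ρ 0)‖ :=
            norm_add_le _ _
        _ ≤ (‖pathM f gg (2*n) ρ - pathM f gg (2*n) (ρ ∘ Fin.rev)‖
            + ‖gg (ρ (Fin.last (2*n))) - f (ρ (Fin.last (2*n)))‖) + ‖gg (ρ 0) - f (ρ 0)‖ :=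
            by linarith [norm_sub_le (pathM f gg (2*n) ρ - pathM f gg (2*n) (ρ ∘ Fin.rev)) (gg (ρ (Fin.last (2*n))) - f (ρ (Fin.last (2*n))))]
        _ ≤ ((‖pathM f gg (2*n) ρ‖ + ‖pathM f gg (2*n) (ρ ∘ Fin.rev)‖)
            + ‖gg (ρ (Fin.last (2*n))) - f (ρ (Fin.last (2*n)))‖) + ‖gg (ρ 0) - f (ρ 0)‖ :=
            by linarith [norm_sub_le (pathM f gg (2*n) ρ) (pathM f gg (2*n) (ρ ∘ Fin.rev))]
        _ ≤ ‖pathM f gg (2*n) ρ‖ + ‖pathM f gg (2*n) (ρ ∘ Fin.rev)‖ + 2*kk := by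
            linarith
    have hb : lam ≤ ‖f (ρ (Fin.last (2*n))) - f (ρ 0)‖ := by
      have := (Finset.mem_filter.1 (hbadf ▸ hρ)).2
      exact this
    have hn2 : ‖(2:ℝ) • (f (ρ (Fin.last (2*n))) - f (ρ 0))‖
        = 2 * ‖f (ρ (Fin.last (2*n))) - f (ρ 0)‖ := by
      rw [norm_smul, Real.norm_eq_abs]
      norm_num
    rw [Finset.mem_union, hbadM, hbadR, Finset.mem_filter, Finset.mem_filter]
    by_contra hcon
    push_neg at hcon
    have hc1 := hcon.1 (Finset.mem_univ ρ)
    have hc2 := hcon.2 (Finset.mem_univ ρ)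
    have : 2*lam ≤ ‖pathM f gg (2*n) ρ‖ + ‖pathM f gg (2*n) (ρ ∘ Fin.rev)‖ + 2*kk := by
      rw [hn2] at h2
      linarith [h2, hb]
    rw [ht] at hc1 hc2
    linarith
  have hsplit : ∑ ρ ∈ badf, pathW π P (2*n) ρ
      ≤ ∑ ρ ∈ badM, pathW π P (2*n) ρ + ∑ ρ ∈ badR, pathW π P (2*n) ρ := by
    have h1 : ∑ ρ ∈ badf.filter (fun ρ => pathW π P (2*n) ρ ≠ 0), pathW π P (2*n) ρ
        = ∑ ρ ∈ badf, pathW π P (2*n) ρ := Finset.sum_filter_ne_zero badf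
    have h2 : badf.filter (fun ρ => pathW π P (2*n) ρ ≠ 0) ⊆ badM ∪ badR := by
      intro ρ hρ
      rw [Finset.mem_filter] at hρ
      exact hsubM ρ hρ.1 hρ.2
    have h3 := Finset.sum_union_inter (s₁ := badM) (s₂ := badR) (f := pathW π P (2*n))
    have h4 : 0 ≤ ∑ ρ ∈ badM ∩ badR, pathW π P (2*n) ρ :=
      Finset.sum_nonneg (fun ρ _ => hWnn ρ)
    have h5 : ∑ ρ ∈ badf.filter (fun ρ => pathW π P (2*n) ρ ≠ 0), pathW π P (2*n) ρ
        ≤ ∑ ρ ∈ badM ∪ badR, pathW π P (2*n) ρ :=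
      Finset.sum_le_sum_of_subset_of_nonneg h2 (fun ρ _ _ => hWnn ρ)
    linarith
  have hrevEq : ∑ ρ ∈ badR, pathW π P (2*n) ρ = ∑ ρ ∈ badM, pathW π P (2*n) ρ := by
    apply Finset.sum_nbij' (i := fun ρ => ρ ∘ Fin.rev) (j := fun ρ => ρ ∘ Fin.rev)
    · intro ρ hρ
      rw [hbadR, Finset.mem_filter] at hρ
      rw [hbadM, Finset.mem_filter]
      exact ⟨Finset.mem_univ _, hρ.2⟩
    · intro ρ hρ
      rw [hbadM, Finset.mem_filter] at hρ
      rw [hbadR, Finset.mem_filter]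
      refine ⟨Finset.mem_univ _, ?_⟩
      have hcomp : (ρ ∘ Fin.rev) ∘ Fin.rev = ρ := by
        funext i
        simp [Fin.rev_rev]
      rw [hcomp]
      exact hρ.2
    · intro ρ _
      funext i
      simp [Fin.rev_rev]
    · intro ρ _
      funext i
      simp [Fin.rev_rev]
    · intro ρ _
      exact (pathW_rev π P hrev (2*n) ρ).symm
  have hmom := expMoment π P f gg hπ0 hπ1 hP0 hP1 hstat (fun x => rfl) (2*kk) c
    (by positivity) hcpos.le hbd2 (2*n)
  have hcosh_lb : ∀ ρ ∈ badM,
      (1:ℝ) ≤ 2 * Real.exp (-(c*t)) * Real.cosh (c * ‖pathM f gg (2*n) ρ‖) := by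
    intro ρ hρ
    have hM : t ≤ ‖pathM f gg (2*n) ρ‖ := by
      rw [hbadM, Finset.mem_filter] at hρ
      exact hρ.2
    have h1 : Real.cosh (c*t) ≤ Real.cosh (c * ‖pathM f gg (2*n) ρ‖) := by
      rw [Real.cosh_le_cosh, abs_of_nonneg (by positivity), abs_of_nonneg (by positivity)]
      exact mul_le_mul_of_nonneg_left hM hcpos.le
    have h2 : Real.exp (c*t) / 2 ≤ Real.cosh (c*t) := by
      rw [Real.cosh_eq]
      have := (Real.exp_pos (-(c*t))).le
      linarith
    have h3 := Real.exp_pos (c*t)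
    have h4 : Real.exp (c*t) ≤ 2 * Real.cosh (c * ‖pathM f gg (2*n) ρ‖) := by linarith
    rw [Real.exp_neg]
    calc (1:ℝ) = (Real.exp (c*t))⁻¹ * Real.exp (c*t) := (inv_mul_cancel₀ h3.ne').symm
      _ ≤ (Real.exp (c*t))⁻¹ * (2 * Real.cosh (c * ‖pathM f gg (2*n) ρ‖)) :=
          mul_le_mul_of_nonneg_left h4 (inv_nonneg.2 h3.le)
      _ = 2 * (Real.exp (c*t))⁻¹ * Real.cosh (c * ‖pathM f gg (2*n) ρ‖) := by ring
  have hcher : ∑ ρ ∈ badM, pathW π P (2*n) ρ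
      ≤ 2 * Real.exp (-(c*t)) * Real.cosh (c*(2*kk))^(2*n) := by
    calc ∑ ρ ∈ badM, pathW π P (2*n) ρ
        ≤ ∑ ρ ∈ badM, pathW π P (2*n) ρ
            * (2 * Real.exp (-(c*t)) * Real.cosh (c * ‖pathM f gg (2*n) ρ‖)) :=
          Finset.sum_le_sum (fun ρ hρ => le_mul_of_one_le_right (hWnn ρ) (hcosh_lb ρ hρ))
      _ ≤ ∑ ρ : Fin (2*n+1) → X, pathW π P (2*n) ρ
            * (2 * Real.exp (-(c*t)) * Real.cosh (c * ‖pathM f gg (2*n) ρ‖)) := by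
          apply Finset.sum_le_sum_of_subset_of_nonneg (Finset.subset_univ _)
          intro ρ _ _
          have hch := (Real.cosh_pos (c * ‖pathM f gg (2*n) ρ‖)).le
          have hex := (Real.exp_pos (-(c*t))).le
          have hw := hWnn ρ
          positivity
      _ = 2 * Real.exp (-(c*t)) * ∑ ρ : Fin (2*n+1) → X, pathW π P (2*n) ρ
            * Real.cosh (c * ‖pathM f gg (2*n) ρ‖) := by
          rw [Finset.mul_sum]
          exact Finset.sum_congr rfl (fun ρ _ => by ring)
      _ ≤ 2 * Real.exp (-(c*t)) * Real.cosh (c*(2*kk))^(2*n) :=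
          mul_le_mul_of_nonneg_left hmom (by positivity)
  have hcosh_exp : Real.cosh (c*(2*kk))^(2*n) ≤ Real.exp (4*(n:ℝ)*kk^2*c^2) := by
    calc Real.cosh (c*(2*kk))^(2*n) ≤ (Real.exp ((c*(2*kk))^2/2))^(2*n) :=
          pow_le_pow_left₀ (Real.cosh_pos _).le (Real.cosh_le_exp_half_sq _) _
      _ = Real.exp (((2*n : ℕ) : ℝ) * ((c*(2*kk))^2/2)) := by rw [← Real.exp_nat_mul]
      _ = Real.exp (4*(n:ℝ)*kk^2*c^2) := by
          congr 1
          push_cast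
          ring
  have hexpo : -(c*t) + 4*(n:ℝ)*kk^2*c^2 ≤ -lam^2/(32*(n:ℝ)*kk^2) := by
    have hceq : -(c*t) + 4*(n:ℝ)*kk^2*c^2 = -(t^2/(16*(n:ℝ)*kk^2)) := by
      rw [hcdef]
      field_simp
      ring
    rw [hceq, neg_div]
    apply neg_le_neg
    rw [div_le_div_iff₀ (by positivity) (by positivity)]
    have h2t : lam^2 ≤ 2*t^2 := by
      rw [ht]
      nlinarith [hbig, hkpos, hlam]
    have hmul : (0:ℝ) ≤ 16*(n:ℝ)*kk^2 := by positivity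
    calc lam^2 * (16*(n:ℝ)*kk^2) ≤ (2*t^2) * (16*(n:ℝ)*kk^2) :=
          mul_le_mul_of_nonneg_right h2t hmul
      _ = t^2*(32*(n:ℝ)*kk^2) := by ring
  have hfinal : ∑ ρ ∈ badf, pathW π P (2*n) ρ
      ≤ 4 * Real.exp (-lam^2/(32*(n:ℝ)*kk^2)) := by
    have e1 : (2:ℝ) * (2 * Real.exp (-(c*t)) * Real.exp (4*(n:ℝ)*kk^2*c^2))
        = 4 * Real.exp (-(c*t) + 4*(n:ℝ)*kk^2*c^2) := by
      rw [Real.exp_add]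
      ring
    have e2 : 2 * Real.exp (-(c*t)) * Real.cosh (c*(2*kk))^(2*n)
        ≤ 2 * Real.exp (-(c*t)) * Real.exp (4*(n:ℝ)*kk^2*c^2) :=
      mul_le_mul_of_nonneg_left hcosh_exp (by positivity)
    have e3 : Real.exp (-(c*t) + 4*(n:ℝ)*kk^2*c^2) ≤ Real.exp (-lam^2/(32*(n:ℝ)*kk^2)) :=
      Real.exp_le_exp.2 hexpo
    calc ∑ ρ ∈ badf, pathW π P (2*n) ρ
        ≤ ∑ ρ ∈ badM, pathW π P (2*n) ρ + ∑ ρ ∈ badR, pathW π P (2*n) ρ := hsplit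
      _ = 2 * ∑ ρ ∈ badM, pathW π P (2*n) ρ := by rw [hrevEq]; ring
      _ ≤ 2 * (2 * Real.exp (-(c*t)) * Real.cosh (c*(2*kk))^(2*n)) :=
          mul_le_mul_of_nonneg_left hcher (by norm_num)
      _ ≤ 2 * (2 * Real.exp (-(c*t)) * Real.exp (4*(n:ℝ)*kk^2*c^2)) :=
          mul_le_mul_of_nonneg_left e2 (by norm_num)
      _ = 4 * Real.exp (-(c*t) + 4*(n:ℝ)*kk^2*c^2) := e1
      _ ≤ 4 * Real.exp (-lam^2/(32*(n:ℝ)*kk^2)) :=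
          mul_le_mul_of_nonneg_left e3 (by norm_num)
  exact le_trans hμ (ENNReal.ofReal_le_ofReal hfinal)

end
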